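/- Let P be a finite set and 𝒬 a nonempty family of subsets of P satisfying consistency with respect to the canonical fail-prone system ℱ = {P \ Q : Q ∈ 𝒬} (for all F ∈ ℱ and Q₁, Q₂ ∈ 𝒬, Q₁ ∩ Q₂ ⊄ F). Then every quorum is a reliable set: for every Q ∈ 𝒬 and every F ∈ ℱ there exists a kernel K of 𝒬 with K ⊆ Q \ F. -/

import Mathlib

/-- `K` is a kernel of the quorum system `𝒬`: it intersects every quorum and
is minimal with this property. -/
def IsKernel {α : Type*} [DecidableEq α] (𝒬 : Finset (Finset α)) (K : Finset α) : Prop :=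
  (∀ Q ∈ 𝒬, (K ∩ Q).Nonempty) ∧ ∀ K' ⊂ K, ∃ Q ∈ 𝒬, K' ∩ Q = ∅

lemma exists_kernel_subset {α : Type*} [DecidableEq α] (𝒬 : Finset (Finset α))
    (S : Finset α) (hS : ∀ Q ∈ 𝒬, (S ∩ Q).Nonempty) :
    ∃ K, IsKernel 𝒬 K ∧ K ⊆ S := by
  classical
  let T : Finset (Finset α) :=
    S.powerset.filter (fun K => ∀ Q ∈ 𝒬, (K ∩ Q).Nonempty)
  have hT : T.Nonempty := ⟨S, by simp only [T, Finset.mem_filter, Finset.mem_powerset]; exact ⟨Finset.Subset.refl S, hS⟩⟩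
  obtain ⟨K, hKT, hmin⟩ := T.exists_minimal hT
  simp only [T, Finset.mem_filter, Finset.mem_powerset] at hKT
  refine ⟨K, ⟨hKT.2, ?_⟩, hKT.1⟩
  intro K' hK'
  by_contra h
  push_neg at h
  have hK'T : K' ∈ T := by
    simp only [T, Finset.mem_filter, Finset.mem_powerset]
    refine ⟨hK'.subset.trans hKT.1, fun Q hQ => ?_⟩
    rcases Finset.eq_empty_or_nonempty (K' ∩ Q) with he | hne
    · exact absurd he (Finset.nonempty_iff_ne_empty.mp (h Q hQ))
    · exact hne
  exact absurd (hmin hK'T hK'.subset) (not_subset_of_ssubset hK')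

/-- If a quorum system satisfies consistency with respect to its canonical
fail-prone system `ℱ = {P \ Q : Q ∈ 𝒬}`, then every quorum is a reliable set:
for every quorum `Q` and every fail-prone set `F` there is a kernel contained
in `Q \ F`. -/
theorem stmt8 {α : Type*} [Fintype α] [DecidableEq α]
    (𝒬 : Finset (Finset α)) (h𝒬 : 𝒬.Nonempty)
    (hcons : ∀ F ∈ 𝒬.image (·ᶜ), ∀ Q₁ ∈ 𝒬, ∀ Q₂ ∈ 𝒬, ¬ (Q₁ ∩ Q₂ ⊆ F)) :
    ∀ Q ∈ 𝒬, ∀ F ∈ 𝒬.image (·ᶜ), ∃ K, IsKernel 𝒬 K ∧ K ⊆ Q \ F := by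
  intro Q hQ F hF
  obtain ⟨Q₂, hQ₂, rfl⟩ := Finset.mem_image.mp hF
  have hS : ∀ Q₁ ∈ 𝒬, ((Q \ Q₂ᶜ) ∩ Q₁).Nonempty := by
    intro Q₁ hQ₁
    have := hcons Q₁ᶜ (Finset.mem_image_of_mem _ hQ₁) Q hQ Q₂ hQ₂
    rw [Finset.not_subset] at this
    obtain ⟨x, hx, hx'⟩ := this
    simp only [Finset.mem_compl, not_not] at hx'
    refine ⟨x, ?_⟩
    simp only [Finset.mem_inter, Finset.mem_sdiff, Finset.mem_compl, not_not] at hx ⊢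
    exact ⟨⟨hx.1, hx.2⟩, hx'⟩
  obtain ⟨K, hK, hKS⟩ := exists_kernel_subset 𝒬 (Q \ Q₂ᶜ) hS
  exact ⟨K, hK, hKS⟩
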